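/- arXiv:1711.01877 — 7 statements merged into one kernel-verified Lean document; each statement's English description precedes it below -/
import Mathlib

section
/- Let K > 0 and a ∈ ℝ, define f(x) = (x − a)·exp(−K·(2^x − 1)), and let x* > a satisfy (ln 2)·K·2^{x*}·(x* − a) = 1. Then for every x > a with x ≠ x*, f(x) < f(x*); that is, f attains its strict global maximum on (a, ∞) at x*. -/
open Real Set

private lemma g_hasDeriv (K a : ℝ) {x : ℝ} (hx : a < x) :
    HasDerivAt (fun x => Real.log (x - a) - K * ((2:ℝ) ^ x - 1))
      (1 / (x - a) - K * ((2:ℝ) ^ x * Real.log 2)) x := by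
  have h1 : HasDerivAt (fun x : ℝ => x - a) 1 x := (hasDerivAt_id x).sub_const a
  have h2 : HasDerivAt (fun x => Real.log (x - a)) (1 / (x - a)) x := by
    simpa using (h1.log (by linarith))
  have h3 : HasDerivAt (fun x : ℝ => (2:ℝ) ^ x) ((2:ℝ) ^ x * Real.log 2) x :=
    (Real.hasStrictDerivAt_const_rpow (by norm_num) x).hasDerivAt
  have h4 : HasDerivAt (fun x : ℝ => K * ((2:ℝ) ^ x - 1))
      (K * ((2:ℝ) ^ x * Real.log 2)) x := ((h3.sub_const 1).const_mul K)
  exact h2.sub h4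

/-- Theorem 2 (optimality): with `f(x) = (x - a)·exp(-K·(2^x - 1))` and
`x* > a` satisfying `(ln 2)·K·2^{x*}·(x* - a) = 1`, the function `f` attains
its strict global maximum on `(a, ∞)` at `x*`. -/
theorem throughput_strict_max_OFT (K a xstar : ℝ) (hK : 0 < K) (hxstar : a < xstar)
    (hstat : Real.log 2 * K * (2 : ℝ) ^ xstar * (xstar - a) = 1) :
    ∀ x : ℝ, a < x → x ≠ xstar →
      (x - a) * Real.exp (-K * ((2 : ℝ) ^ x - 1)) <
        (xstar - a) * Real.exp (-K * ((2 : ℝ) ^ xstar - 1)) := by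
  intro x hx hne
  set g : ℝ → ℝ := fun x => Real.log (x - a) - K * ((2:ℝ) ^ x - 1) with hg
  have hrepr : ∀ y : ℝ, a < y →
      (y - a) * Real.exp (-K * ((2:ℝ) ^ y - 1)) = Real.exp (g y) := by
    intro y hy
    rw [hg]
    simp only [Real.exp_sub, Real.exp_log (by linarith : (0:ℝ) < y - a)]
    rw [neg_mul, Real.exp_neg]
    ring
  rw [hrepr x hx, hrepr xstar hxstar, Real.exp_lt_exp]
  -- derivative sign
  have hlog2 : (0:ℝ) < Real.log 2 := Real.log_pos (by norm_num)
  have hstat' : 1 / (xstar - a) = K * ((2:ℝ)^xstar * Real.log 2) := by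
    have hpos : (0:ℝ) < xstar - a := by linarith
    field_simp
    nlinarith [hstat]
  have hderivsign : ∀ y : ℝ, a < y → y < xstar →
      0 < 1 / (y - a) - K * ((2:ℝ) ^ y * Real.log 2) := by
    intro y hy hylt
    have h1 : 1 / (xstar - a) < 1 / (y - a) :=
      one_div_lt_one_div_of_lt (by linarith) (by linarith)
    have h2 : (2:ℝ)^y < (2:ℝ)^xstar :=
      Real.rpow_lt_rpow_left_iff (by norm_num : (1:ℝ) < 2) |>.mpr hylt
    nlinarith [hstat', mul_pos hK hlog2]
  have hderivsign' : ∀ y : ℝ, xstar < y →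
      1 / (y - a) - K * ((2:ℝ) ^ y * Real.log 2) < 0 := by
    intro y hy
    have h1 : 1 / (y - a) < 1 / (xstar - a) :=
      one_div_lt_one_div_of_lt (by linarith) (by linarith)
    have h2 : (2:ℝ)^xstar < (2:ℝ)^y :=
      Real.rpow_lt_rpow_left_iff (by norm_num : (1:ℝ) < 2) |>.mpr hy
    nlinarith [hstat', mul_pos hK hlog2]
  rcases lt_or_gt_of_ne hne with hlt | hgt
  · -- x < xstar : g strictly increasing on [x, xstar]
    have hmono : StrictMonoOn g (Icc x xstar) := by
      apply strictMonoOn_of_deriv_pos (convex_Icc x xstar)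
      · apply ContinuousOn.sub
        · exact (continuousOn_id.sub continuousOn_const).log
            (fun y hy => by rcases hy with ⟨hy1, _⟩; have := lt_of_lt_of_le hx hy1; show y - a ≠ 0; intro h; linarith)
        · exact (continuousOn_const.mul ((Continuous.continuousOn (continuous_iff_continuousAt.mpr (fun b => Real.continuousAt_const_rpow (by norm_num)))).sub continuousOn_const))
      · intro y hy
        rw [interior_Icc] at hy
        have hay : a < y := lt_trans hx hy.1
        rw [(g_hasDeriv K a hay).deriv]
        exact hderivsign y hay hy.2
    have := hmono (left_mem_Icc.mpr hlt.le) (right_mem_Icc.mpr hlt.le) hlt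
    exact this
  · -- xstar < x : g strictly decreasing on [xstar, x]
    have hanti : StrictAntiOn g (Icc xstar x) := by
      apply strictAntiOn_of_deriv_neg (convex_Icc xstar x)
      · apply ContinuousOn.sub
        · exact (continuousOn_id.sub continuousOn_const).log
            (fun y hy => by rcases hy with ⟨hy1, _⟩; have := lt_of_lt_of_le hxstar hy1; show y - a ≠ 0; intro h; linarith)
        · exact (continuousOn_const.mul ((Continuous.continuousOn (continuous_iff_continuousAt.mpr (fun b => Real.continuousAt_const_rpow (by norm_num)))).sub continuousOn_const))
      · intro y hy
        rw [interior_Icc] at hy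
        have hay : a < y := lt_trans hxstar hy.1
        rw [(g_hasDeriv K a hay).deriv]
        exact hderivsign' y hy.1
    exact hanti (left_mem_Icc.mpr hgt.le) (right_mem_Icc.mpr hgt.le) hgt
end

section
/- Let K > 0 and a ∈ ℝ, define f(x) = (x − a)·exp(−K·(2^x − 1)), and let x* > a satisfy (ln 2)·K·2^{x*}·(x* − a) = 1. Then f is strictly increasing on the interval (a, x*] and strictly decreasing on the interval [x*, ∞); in particular f is quasiconcave on (a, ∞). -/
/-- Quasi-concavity claim of Theorem 2: with `f(x) = (x - a)·exp(-K·(2^x - 1))`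
and `x* > a` satisfying `(ln 2)·K·2^{x*}·(x* - a) = 1`, `f` is strictly
increasing on `(a, x*]`, strictly decreasing on `[x*, ∞)`, and in particular
quasiconcave on `(a, ∞)`. -/
theorem throughput_quasiconcave_OFT (K a xstar : ℝ) (hK : 0 < K) (hxstar : a < xstar)
    (hstat : Real.log 2 * K * (2 : ℝ) ^ xstar * (xstar - a) = 1) :
    StrictMonoOn (fun x : ℝ => (x - a) * Real.exp (-K * ((2 : ℝ) ^ x - 1)))
        (Set.Ioc a xstar) ∧
    StrictAntiOn (fun x : ℝ => (x - a) * Real.exp (-K * ((2 : ℝ) ^ x - 1)))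
        (Set.Ici xstar) ∧
    QuasiconcaveOn ℝ (Set.Ioi a)
        (fun x : ℝ => (x - a) * Real.exp (-K * ((2 : ℝ) ^ x - 1))) := by
  set f : ℝ → ℝ := fun x : ℝ => (x - a) * Real.exp (-K * ((2 : ℝ) ^ x - 1)) with hf
  have hlog2 : 0 < Real.log 2 := Real.log_pos (by norm_num)
  -- derivative of f
  have hderiv : ∀ x : ℝ, HasDerivAt f
      (Real.exp (-K * ((2 : ℝ) ^ x - 1)) *
        (1 - Real.log 2 * K * (2 : ℝ) ^ x * (x - a))) x := by
    intro x
    have h2 : HasDerivAt (fun x : ℝ => (2 : ℝ) ^ x) ((2 : ℝ) ^ x * Real.log 2) x :=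
      (Real.hasStrictDerivAt_const_rpow (by norm_num) x).hasDerivAt
    have hu : HasDerivAt (fun x : ℝ => -K * ((2 : ℝ) ^ x - 1))
        (-K * ((2 : ℝ) ^ x * Real.log 2)) x := (h2.sub_const 1).const_mul (-K)
    have he := hu.exp
    have hid : HasDerivAt (fun x : ℝ => x - a) 1 x := (hasDerivAt_id x).sub_const a
    have : HasDerivAt (fun y : ℝ => (y - a) * Real.exp (-K * ((2 : ℝ) ^ y - 1)))
        (1 * Real.exp (-K * ((2 : ℝ) ^ x - 1)) + (x - a) * (Real.exp (-K * ((2 : ℝ) ^ x - 1)) * (-K * ((2 : ℝ) ^ x * Real.log 2)))) x := hid.mul he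
    convert this using 1
    ring
  -- monotonicity of g(x) = log 2 * K * 2^x * (x - a) on Ici a
  have hg : ∀ x y : ℝ, a ≤ x → x < y →
      Real.log 2 * K * (2 : ℝ) ^ x * (x - a) < Real.log 2 * K * (2 : ℝ) ^ y * (y - a) := by
    intro x y hax hxy
    have h2x : (0 : ℝ) < (2 : ℝ) ^ x := Real.rpow_pos_of_pos (by norm_num) x
    have h2y : (0 : ℝ) < (2 : ℝ) ^ y := Real.rpow_pos_of_pos (by norm_num) y
    have h2lt : (2 : ℝ) ^ x < (2 : ℝ) ^ y :=
      Real.rpow_lt_rpow_left_iff (by norm_num : (1:ℝ) < 2) |>.mpr hxy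
    have hC : 0 < Real.log 2 * K := mul_pos hlog2 hK
    nlinarith [mul_nonneg hC.le (mul_nonneg (sub_nonneg.mpr h2lt.le) (sub_nonneg.mpr hax)),
      mul_pos hC (mul_pos h2y (sub_pos.mpr hxy))]
  -- sign of derivative
  have hpos : ∀ x ∈ Set.Ioo a xstar,
      0 < Real.exp (-K * ((2 : ℝ) ^ x - 1)) *
        (1 - Real.log 2 * K * (2 : ℝ) ^ x * (x - a)) := by
    intro x hx
    have := hg x xstar hx.1.le hx.2
    rw [hstat] at this
    exact mul_pos (Real.exp_pos _) (by linarith)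
  have hneg : ∀ x ∈ Set.Ioi xstar,
      Real.exp (-K * ((2 : ℝ) ^ x - 1)) *
        (1 - Real.log 2 * K * (2 : ℝ) ^ x * (x - a)) < 0 := by
    intro x hx
    have := hg xstar x hxstar.le hx
    rw [hstat] at this
    exact mul_neg_of_pos_of_neg (Real.exp_pos _) (by linarith)
  have hcont : Continuous f :=
    continuous_iff_continuousAt.mpr fun x => (hderiv x).continuousAt
  have hmono : StrictMonoOn f (Set.Ioc a xstar) := by
    apply strictMonoOn_of_deriv_pos (convex_Ioc a xstar) hcont.continuousOn
    intro x hx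
    rw [interior_Ioc] at hx
    rw [(hderiv x).deriv]
    exact hpos x hx
  have hanti : StrictAntiOn f (Set.Ici xstar) := by
    apply strictAntiOn_of_deriv_neg (convex_Ici xstar) hcont.continuousOn
    intro x hx
    rw [interior_Ici] at hx
    rw [(hderiv x).deriv]
    exact hneg x hx
  refine ⟨hmono, hanti, ?_⟩
  intro b
  have hoc : Set.OrdConnected ({x | x ∈ Set.Ioi a ∧ b ≤ f x}) := by
    constructor
    intro x hx y hy z hz
    refine ⟨lt_of_lt_of_le hx.1 hz.1, ?_⟩
    rcases le_total z xstar with hzx | hzx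
    · have hxI : x ∈ Set.Ioc a xstar := ⟨hx.1, le_trans hz.1 hzx⟩
      have hzI : z ∈ Set.Ioc a xstar := ⟨lt_of_lt_of_le hx.1 hz.1, hzx⟩
      exact le_trans hx.2 (hmono.monotoneOn hxI hzI hz.1)
    · have hyI : y ∈ Set.Ici xstar := le_trans hzx hz.2
      exact le_trans hy.2 (hanti.antitoneOn (Set.mem_Ici.mpr hzx) hyI hz.2)
  exact hoc.convex
end

section
/- Let a₁ ≤ a₂ be reals and K₁ ≥ K₂ > 0 be reals with (a₁, K₁) ≠ (a₂, K₂). If w₁ > 0 and w₂ > 0 satisfy w₁·e^{w₁} = 2^{−a₁}/K₁ and w₂·e^{w₂} = 2^{−a₂}/K₂, then a₁ + w₁/ln 2 < a₂ + w₂/ln 2. -/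
/-- Monotonicity step in the proof of Corollary 2: if `a₁ ≤ a₂`,
`K₁ ≥ K₂ > 0` with `(a₁, K₁) ≠ (a₂, K₂)`, and `w₁, w₂ > 0` satisfy
`w₁·e^{w₁} = 2^{-a₁}/K₁` and `w₂·e^{w₂} = 2^{-a₂}/K₂`, then
`a₁ + w₁/ln 2 < a₂ + w₂/ln 2`. -/
theorem optimal_rate_strict_mono (a₁ a₂ K₁ K₂ w₁ w₂ : ℝ)
    (ha : a₁ ≤ a₂) (hK₂ : 0 < K₂) (hK : K₂ ≤ K₁)
    (hne : (a₁, K₁) ≠ (a₂, K₂)) (hw₁ : 0 < w₁) (hw₂ : 0 < w₂)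
    (hl₁ : w₁ * Real.exp w₁ = (2 : ℝ) ^ (-a₁) / K₁)
    (hl₂ : w₂ * Real.exp w₂ = (2 : ℝ) ^ (-a₂) / K₂) :
    a₁ + w₁ / Real.log 2 < a₂ + w₂ / Real.log 2 := by
  have hK₁ : 0 < K₁ := lt_of_lt_of_le hK₂ hK
  have hlog2 : 0 < Real.log 2 := Real.log_pos (by norm_num)
  set c₁ := K₁ * w₁ with hc₁def
  set c₂ := K₂ * w₂ with hc₂def
  have hc₁ : 0 < c₁ := mul_pos hK₁ hw₁
  have hc₂ : 0 < c₂ := mul_pos hK₂ hw₂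
  -- multiply by K to get cᵢ * exp wᵢ = 2^(-aᵢ)
  have he₁ : c₁ * Real.exp w₁ = (2 : ℝ) ^ (-a₁) := by
    have := congrArg (fun x => K₁ * x) hl₁
    simpa [hc₁def, mul_comm, mul_left_comm, mul_assoc, mul_div_cancel₀,
      hK₁.ne'] using this
  have he₂ : c₂ * Real.exp w₂ = (2 : ℝ) ^ (-a₂) := by
    have := congrArg (fun x => K₂ * x) hl₂
    simpa [hc₂def, mul_comm, mul_left_comm, mul_assoc, mul_div_cancel₀,
      hK₂.ne'] using this
  -- take logs
  have hlog₁ : Real.log c₁ + w₁ = -a₁ * Real.log 2 := by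
    have := congrArg Real.log he₁
    rwa [Real.log_mul hc₁.ne' (Real.exp_pos w₁).ne', Real.log_exp,
      Real.log_rpow (by norm_num : (0:ℝ) < 2)] at this
  have hlog₂ : Real.log c₂ + w₂ = -a₂ * Real.log 2 := by
    have := congrArg Real.log he₂
    rwa [Real.log_mul hc₂.ne' (Real.exp_pos w₂).ne', Real.log_exp,
      Real.log_rpow (by norm_num : (0:ℝ) < 2)] at this
  -- key inequality: c₂ < c₁
  have hcc : c₂ < c₁ := by
    by_contra h
    push_neg at h  -- c₁ ≤ c₂
    have hlogle : Real.log c₁ ≤ Real.log c₂ := Real.log_le_log hc₁ h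
    -- from the log equations and a₁ ≤ a₂ : log c₁ + w₁ ≥ log c₂ + w₂
    have h1 : Real.log c₂ + w₂ ≤ Real.log c₁ + w₁ := by
      rw [hlog₁, hlog₂]; nlinarith
    have hw21 : w₂ ≤ w₁ := by linarith
    -- from c₁ ≤ c₂ and K₂ ≤ K₁ : w₁ ≤ w₂
    have hw12 : w₁ ≤ w₂ := by
      have : K₁ * w₁ ≤ K₁ * w₂ := by nlinarith
      exact le_of_mul_le_mul_left this hK₁
    have hww : w₁ = w₂ := le_antisymm hw12 hw21
    have haa : a₂ ≤ a₁ := by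
      have : -a₁ * Real.log 2 - w₁ ≤ -a₂ * Real.log 2 - w₂ := by
        rw [← hlog₁, ← hlog₂]; linarith
      nlinarith
    have haeq : a₁ = a₂ := le_antisymm ha haa
    have hceq : c₁ = c₂ := by
      have hl : Real.log c₁ = Real.log c₂ := by
        have e1 : Real.log c₁ = -a₁ * Real.log 2 - w₁ := by linarith
        have e2 : Real.log c₂ = -a₂ * Real.log 2 - w₂ := by linarith
        rw [e1, e2, haeq, hww]
      exact Real.log_injOn_pos (Set.mem_Ioi.mpr hc₁) (Set.mem_Ioi.mpr hc₂) hl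
    have hKeq : K₁ = K₂ := by
      have := hceq
      rw [hc₁def, hc₂def, hww] at this
      exact mul_right_cancel₀ hw₂.ne' this
    exact hne (by rw [haeq, hKeq])
  -- conclude
  have hloglt : Real.log c₂ < Real.log c₁ := Real.log_lt_log hc₂ hcc
  have key : a₁ * Real.log 2 + w₁ < a₂ * Real.log 2 + w₂ := by linarith
  rw [show a₁ + w₁ / Real.log 2 = (a₁ * Real.log 2 + w₁) / Real.log 2 by
        field_simp,
      show a₂ + w₂ / Real.log 2 = (a₂ * Real.log 2 + w₂) / Real.log 2 by
        field_simp]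
  exact div_lt_div_of_pos_right key hlog2
end

section
/- Fix reals p > 0, L > 0, K₁ > 0, B > 0 and α ≥ 2. For each real N ≥ 1 define: w(N) > 0 by w(N)·e^{w(N)} = (α/2)·(B/(N·K₁))^{−α/2}; R_e(N) = log₂(1 + (2p/α)·w(N)); K₂(N) = ((L/N)^α + 1)/p; s(N) > 0 by s(N)·e^{s(N)} = 2^{−R_e(N)}/K₂(N); and R_t*(N) = R_e(N) + s(N)/ln 2. Then R_t* is strictly increasing in N: for all 1 ≤ N₁ < N₂, R_t*(N₁) < R_t*(N₂). -/
private lemma tet_lt {a b : ℝ} (ha : 0 < a) (hab : a < b) :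
    a * Real.exp a < b * Real.exp b :=
  mul_lt_mul hab (Real.exp_lt_exp.2 hab).le (Real.exp_pos a) (ha.trans hab).le

private lemma tet_lt_rev {a b : ℝ} (ha : 0 < a) (hb : 0 < b)
    (h : a * Real.exp a < b * Real.exp b) : a < b := by
  by_contra hle
  push_neg at hle
  rcases eq_or_lt_of_le hle with h' | h'
  · rw [h'] at h; exact lt_irrefl _ h
  · exact absurd (tet_lt hb h') (not_lt.2 h.le)

/-- Corollary 2 (first part, OFT scheme): the optimal codeword rate
`R_t*(N) = R_e(N) + s(N)/ln 2` is strictly increasing in the hop-count `N`,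
where `w(N)·e^{w(N)} = (α/2)·(B/(N·K₁))^{-α/2}`, `R_e(N) = log₂(1 + (2p/α)·w(N))`,
`K₂(N) = ((L/N)^α + 1)/p` and `s(N)·e^{s(N)} = 2^{-R_e(N)}/K₂(N)`. -/
theorem optimal_Rt_increasing_in_hops (p L K₁ B α : ℝ)
    (hp : 0 < p) (hL : 0 < L) (hK₁ : 0 < K₁) (hB : 0 < B) (hα : 2 ≤ α)
    (w Re K₂ s Rt : ℝ → ℝ)
    (hwpos : ∀ N : ℝ, 1 ≤ N → 0 < w N)
    (hw : ∀ N : ℝ, 1 ≤ N →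
      w N * Real.exp (w N) = (α / 2) * (B / (N * K₁)) ^ (-(α / 2)))
    (hRe : ∀ N : ℝ, 1 ≤ N → Re N = Real.logb 2 (1 + (2 * p / α) * w N))
    (hK₂ : ∀ N : ℝ, 1 ≤ N → K₂ N = ((L / N) ^ α + 1) / p)
    (hspos : ∀ N : ℝ, 1 ≤ N → 0 < s N)
    (hs : ∀ N : ℝ, 1 ≤ N → s N * Real.exp (s N) = (2 : ℝ) ^ (-(Re N)) / K₂ N)
    (hRt : ∀ N : ℝ, 1 ≤ N → Rt N = Re N + s N / Real.log 2) :
    ∀ N₁ N₂ : ℝ, 1 ≤ N₁ → N₁ < N₂ → Rt N₁ < Rt N₂ := by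
  intro N₁ N₂ hN₁ hN12
  have hN₂ : (1:ℝ) ≤ N₂ := hN₁.trans hN12.le
  have hN₁pos : (0:ℝ) < N₁ := lt_of_lt_of_le one_pos hN₁
  have hN₂pos : (0:ℝ) < N₂ := lt_of_lt_of_le one_pos hN₂
  have hαpos : (0:ℝ) < α := lt_of_lt_of_le two_pos hα
  -- Step A : w N₁ < w N₂
  have hbase : B / (N₂ * K₁) < B / (N₁ * K₁) := by
    apply div_lt_div_of_pos_left hB (by positivity)
    exact mul_lt_mul_of_pos_right hN12 hK₁
  have hbase1 : 0 < B / (N₂ * K₁) := by positivity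
  have hrhs : (α / 2) * (B / (N₁ * K₁)) ^ (-(α / 2))
      < (α / 2) * (B / (N₂ * K₁)) ^ (-(α / 2)) := by
    apply mul_lt_mul_of_pos_left _ (by positivity)
    rw [Real.rpow_neg (by positivity), Real.rpow_neg hbase1.le]
    apply inv_strictAnti₀ (by positivity)
    exact Real.rpow_lt_rpow hbase1.le hbase (by positivity)
  have hwlt : w N₁ < w N₂ := by
    apply tet_lt_rev (hwpos N₁ hN₁) (hwpos N₂ hN₂)
    rw [hw N₁ hN₁, hw N₂ hN₂]; exact hrhs
  -- x values
  set c : ℝ := 2 * p / α with hc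
  have hcpos : 0 < c := by positivity
  set x₁ : ℝ := 1 + c * w N₁ with hx₁
  set x₂ : ℝ := 1 + c * w N₂ with hx₂
  have hx₁pos : 0 < x₁ := by have := hwpos N₁ hN₁; positivity
  have hx₂pos : 0 < x₂ := by have := hwpos N₂ hN₂; positivity
  have hxlt : x₁ < x₂ := by
    have := mul_lt_mul_of_pos_left hwlt hcpos
    simpa [hx₁, hx₂] using add_lt_add_left this 1
  -- y values
  set y₁ : ℝ := K₂ N₁ with hy₁
  set y₂ : ℝ := K₂ N₂ with hy₂
  have hLpow₁ : 0 < (L / N₁) ^ α := Real.rpow_pos_of_pos (by positivity) α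
  have hLpow₂ : 0 < (L / N₂) ^ α := Real.rpow_pos_of_pos (by positivity) α
  have hy₁pos : 0 < y₁ := by rw [hy₁, hK₂ N₁ hN₁]; positivity
  have hy₂pos : 0 < y₂ := by rw [hy₂, hK₂ N₂ hN₂]; positivity
  have hylt : y₂ < y₁ := by
    rw [hy₁, hy₂, hK₂ N₁ hN₁, hK₂ N₂ hN₂]
    apply div_lt_div_of_pos_right _ hp
    apply add_lt_add_left
    apply Real.rpow_lt_rpow (by positivity) _ hαpos
    exact div_lt_div_of_pos_left hL hN₁pos hN12
  -- key identities : s_i * exp(log x_i + s_i) = 1 / y_i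
  have hkey : ∀ N : ℝ, 1 ≤ N → ∀ x : ℝ, 0 < x → Re N = Real.logb 2 x →
      s N * Real.exp (Real.log x + s N) = 1 / K₂ N := by
    intro N hN x hx hRex
    have h2 : (2:ℝ) ^ (-(Re N)) = x⁻¹ := by
      rw [hRex, Real.rpow_neg (by norm_num), Real.rpow_logb (by norm_num) (by norm_num) hx]
    have := hs N hN
    rw [h2] at this
    rw [Real.exp_add, Real.exp_log hx]
    have hKpos : 0 < K₂ N := by rw [hK₂ N hN]; positivity
    field_simp at this ⊢
    nlinarith [this]
  have hkey₁ : s N₁ * Real.exp (Real.log x₁ + s N₁) = 1 / y₁ :=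
    hkey N₁ hN₁ x₁ hx₁pos (hRe N₁ hN₁)
  have hkey₂ : s N₂ * Real.exp (Real.log x₂ + s N₂) = 1 / y₂ :=
    hkey N₂ hN₂ x₂ hx₂pos (hRe N₂ hN₂)
  -- main inequality : log x₁ + s N₁ < log x₂ + s N₂
  have hmain : Real.log x₁ + s N₁ < Real.log x₂ + s N₂ := by
    by_contra hcon
    push_neg at hcon
    have h1y : 1 / y₁ < 1 / y₂ := by
      apply div_lt_div_of_pos_left one_pos hy₂pos hylt
    have hlt : s N₁ * Real.exp (Real.log x₁ + s N₁)
        < s N₂ * Real.exp (Real.log x₁ + s N₁) := by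
      rw [hkey₁]
      calc 1 / y₁ < 1 / y₂ := h1y
        _ = s N₂ * Real.exp (Real.log x₂ + s N₂) := hkey₂.symm
        _ ≤ s N₂ * Real.exp (Real.log x₁ + s N₁) := by
            apply mul_le_mul_of_nonneg_left _ (hspos N₂ hN₂).le
            exact Real.exp_le_exp.2 hcon
    have hslt : s N₁ < s N₂ :=
      lt_of_mul_lt_mul_right hlt (Real.exp_pos _).le
    have : Real.log x₂ < Real.log x₁ := by linarith
    exact absurd (Real.log_lt_log hx₁pos hxlt) (not_lt.2 this.le)
  -- conclude
  have hlog2 : 0 < Real.log 2 := Real.log_pos (by norm_num)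
  rw [hRt N₁ hN₁, hRt N₂ hN₂, hRe N₁ hN₁, hRe N₂ hN₂]
  rw [Real.logb, Real.logb, ← add_div, ← add_div]
  exact div_lt_div_of_pos_right hmain hlog2
end

section
/- Fix reals p > 0, L > 0, K₁ > 0, B > 0 and α ≥ 2. For each positive integer N define: w(N) > 0 by w(N)·e^{w(N)} = (α/2)·(B/(N·K₁))^{−α/2}; R_e(N) = log₂(1 + (2p/α)·w(N)); K₂(N) = ((L/N)^α + 1)/p; and s(N) > 0 by s(N)·e^{s(N)} = 2^{−R_e(N)}/K₂(N). Then s(N) → 0 as N → ∞; equivalently, the optimal confidential-information rate R_s*(N) = s(N)/ln 2 tends to 0 as the number of hops grows to infinity. -/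
/-- Corollary 2 (second part, OFT scheme): the optimal confidential-information
rate `R_s*(N) = s(N)/ln 2` tends to `0` as the number of hops `N → ∞`, where
`w(N)·e^{w(N)} = (α/2)·(B/(N·K₁))^{-α/2}`, `R_e(N) = log₂(1 + (2p/α)·w(N))`,
`K₂(N) = ((L/N)^α + 1)/p` and `s(N)·e^{s(N)} = 2^{-R_e(N)}/K₂(N)`. -/
theorem optimal_Rs_tendsto_zero (p L K₁ B α : ℝ)
    (hp : 0 < p) (hL : 0 < L) (hK₁ : 0 < K₁) (hB : 0 < B) (hα : 2 ≤ α)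
    (w Re K₂ s : ℕ → ℝ)
    (hwpos : ∀ N : ℕ, 1 ≤ N → 0 < w N)
    (hw : ∀ N : ℕ, 1 ≤ N →
      w N * Real.exp (w N) = (α / 2) * (B / ((N : ℝ) * K₁)) ^ (-(α / 2)))
    (hRe : ∀ N : ℕ, 1 ≤ N → Re N = Real.logb 2 (1 + (2 * p / α) * w N))
    (hK₂ : ∀ N : ℕ, 1 ≤ N → K₂ N = ((L / (N : ℝ)) ^ α + 1) / p)
    (hspos : ∀ N : ℕ, 1 ≤ N → 0 < s N)
    (hs : ∀ N : ℕ, 1 ≤ N → s N * Real.exp (s N) = (2 : ℝ) ^ (-(Re N)) / K₂ N) :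
    Filter.Tendsto s Filter.atTop (nhds 0) := by
  have hα0 : (0:ℝ) < α := lt_of_lt_of_le two_pos hα
  set c := 2 * p / α with hc
  have hcpos : 0 < c := by positivity
  -- N*K₁/B → ∞
  have hnt : Filter.Tendsto (fun N : ℕ => (N : ℝ) * K₁ / B) Filter.atTop Filter.atTop :=
    (tendsto_natCast_atTop_atTop.atTop_mul_const hK₁).atTop_div_const hB
  -- rewrite hw
  have hw' : ∀ N : ℕ, 1 ≤ N →
      w N * Real.exp (w N) = (α / 2) * ((N : ℝ) * K₁ / B) ^ (α / 2) := by
    intro N hN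
    have hNpos : (0:ℝ) < N := by exact_mod_cast hN
    rw [hw N hN, Real.rpow_neg (by positivity), ← Real.inv_rpow (by positivity),
      inv_div]
  -- w → ∞
  have hwtop : Filter.Tendsto w Filter.atTop Filter.atTop := by
    rw [Filter.tendsto_atTop]
    intro M
    set M' := max M 1 with hM'
    have hM'1 : (1:ℝ) ≤ M' := le_max_right _ _
    have hM'pos : (0:ℝ) < M' := lt_of_lt_of_le one_pos hM'1
    have hev := (hnt.eventually_ge_atTop (max 1 (M' * Real.exp M')))
    filter_upwards [hev, Filter.eventually_ge_atTop 1] with N hNe hN1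
    have hx1 : (1:ℝ) ≤ (N : ℝ) * K₁ / B := le_trans (le_max_left _ _) hNe
    have hx2 : M' * Real.exp M' ≤ (N : ℝ) * K₁ / B := le_trans (le_max_right _ _) hNe
    have hge : M' * Real.exp M' ≤ w N * Real.exp (w N) := by
      rw [hw' N hN1]
      calc M' * Real.exp M' ≤ (N : ℝ) * K₁ / B := hx2
        _ = ((N : ℝ) * K₁ / B) ^ (1:ℝ) := (Real.rpow_one _).symm
        _ ≤ ((N : ℝ) * K₁ / B) ^ (α / 2) := Real.rpow_le_rpow_of_exponent_le hx1
            (by linarith)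
        _ ≤ (α / 2) * ((N : ℝ) * K₁ / B) ^ (α / 2) := by
            nlinarith [Real.rpow_nonneg (le_trans zero_le_one hx1) (α/2)]
    by_contra hlt
    push_neg at hlt
    have hwM : w N < M' := lt_of_lt_of_le hlt (le_max_left _ _)
    have : w N * Real.exp (w N) < M' * Real.exp M' :=
      mul_lt_mul hwM (Real.exp_le_exp.mpr hwM.le) (Real.exp_pos _) hM'pos.le
    linarith
  -- the bounding sequence g
  have hg : Filter.Tendsto (fun N => p / (1 + c * w N)) Filter.atTop (nhds 0) := by
    apply Filter.Tendsto.div_atTop tendsto_const_nhds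
    have := hwtop.const_mul_atTop hcpos
    exact Filter.tendsto_atTop_add_const_left _ 1 this
  apply tendsto_of_tendsto_of_tendsto_of_le_of_le' tendsto_const_nhds hg
  · filter_upwards [Filter.eventually_ge_atTop 1] with N hN
    exact (hspos N hN).le
  · filter_upwards [Filter.eventually_ge_atTop 1] with N hN
    have hNpos : (0:ℝ) < N := by exact_mod_cast hN
    have hwn := hwpos N hN
    have h1 : (0:ℝ) < 1 + c * w N := by positivity
    have h2 : (2:ℝ) ^ (-(Re N)) = (1 + c * w N)⁻¹ := by
      rw [hRe N hN, Real.rpow_neg (by norm_num), Real.rpow_logb two_pos (by norm_num) h1]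
    have hK2pos : 0 < K₂ N := by
      rw [hK₂ N hN]
      positivity
    have hK2 : (K₂ N)⁻¹ ≤ p := by
      rw [hK₂ N hN]
      have hr : (0:ℝ) ≤ (L / (N:ℝ)) ^ α := Real.rpow_nonneg (by positivity) α
      rw [inv_div]
      rw [div_le_iff₀ (by linarith)]
      nlinarith
    have heq : s N * Real.exp (s N) = (1 + c * w N)⁻¹ * (K₂ N)⁻¹ := by
      rw [hs N hN, h2, div_eq_mul_inv]
    have hsle : s N ≤ s N * Real.exp (s N) := by
      nlinarith [Real.one_le_exp (hspos N hN).le, (hspos N hN)]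
    calc s N ≤ (1 + c * w N)⁻¹ * (K₂ N)⁻¹ := heq ▸ hsle
      _ ≤ (1 + c * w N)⁻¹ * p := by
          apply mul_le_mul_of_nonneg_left hK2 (by positivity)
      _ = p / (1 + c * w N) := by rw [mul_comm, div_eq_mul_inv]
end

section
/- Let E > 0, F > 0 and N ≥ 1 be fixed reals. For each p > 0 let s(p) > 0 satisfy s(p)·e^{s(p)} = p/(E·(F·p + 1)), let s∞ > 0 satisfy s∞·e^{s∞} = 1/(E·F), and define U(p) = (s(p)/(N·ln 2))·exp(−(E/p)·((1 + F·p)·e^{s(p)} − 1)). Then U(p) → (s∞/(N·ln 2))·exp(−E·F·e^{s∞}) as p → ∞. -/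
/-- Throughput limit of Corollary 3 (OFT scheme): with `s(p) > 0` satisfying
`s(p)·e^{s(p)} = p/(E·(F·p + 1))`, `sInfty > 0` satisfying
`sInfty·e^{sInfty} = 1/(E·F)`, and
`U(p) = (s(p)/(N·ln 2))·exp(-(E/p)·((1 + F·p)·e^{s(p)} - 1))`, one has
`U(p) → (sInfty/(N·ln 2))·exp(-E·F·e^{sInfty})` as `p → ∞`. -/
theorem throughput_high_SNR_limit (E F N : ℝ) (hE : 0 < E) (hF : 0 < F)
    (hN : 1 ≤ N) (s : ℝ → ℝ) (sInfty : ℝ)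
    (hspos : ∀ p : ℝ, 0 < p → 0 < s p)
    (hs : ∀ p : ℝ, 0 < p → s p * Real.exp (s p) = p / (E * (F * p + 1)))
    (hsInftyPos : 0 < sInfty)
    (hsInfty : sInfty * Real.exp sInfty = 1 / (E * F)) :
    Filter.Tendsto
      (fun p : ℝ => (s p / (N * Real.log 2)) *
        Real.exp (-(E / p) * ((1 + F * p) * Real.exp (s p) - 1)))
      Filter.atTop
      (nhds ((sInfty / (N * Real.log 2)) *
        Real.exp (-(E * F * Real.exp sInfty)))) := by
  have hmono : ∀ x y : ℝ, 0 ≤ x → x < y → x * Real.exp x < y * Real.exp y := by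
    intro x y hx hxy
    have hy : 0 < y := lt_of_le_of_lt hx hxy
    calc x * Real.exp x < y * Real.exp x :=
          mul_lt_mul_of_pos_right hxy (Real.exp_pos x)
      _ ≤ y * Real.exp y :=
          mul_le_mul_of_nonneg_left (Real.exp_le_exp.2 hxy.le) hy.le
  have hmono' : ∀ x y : ℝ, 0 ≤ x → x ≤ y → x * Real.exp x ≤ y * Real.exp y := by
    intro x y hx hxy
    rcases eq_or_lt_of_le hxy with rfl | h
    · exact le_rfl
    · exact (hmono x y hx h).le
  have hEF : (0:ℝ) < E * F := mul_pos hE hF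
  -- convergence of the right-hand side p/(E(Fp+1)) → 1/(EF)
  have h1 : Filter.Tendsto (fun p : ℝ => E * (F + p⁻¹)) Filter.atTop (nhds (E * F)) := by
    have := Filter.Tendsto.mul (tendsto_const_nhds (x := E))
      (Filter.Tendsto.add (tendsto_const_nhds (x := F)) tendsto_inv_atTop_zero)
    simpa using this
  have hg : Filter.Tendsto (fun p : ℝ => p / (E * (F * p + 1))) Filter.atTop
      (nhds (1 / (E * F))) := by
    have h2 := h1.inv₀ hEF.ne'
    rw [one_div]
    refine h2.congr' ?_
    filter_upwards [Filter.eventually_gt_atTop 0] with p hp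
    field_simp
  -- s p → sInfty
  have hS : Filter.Tendsto s Filter.atTop (nhds sInfty) := by
    rw [tendsto_order]
    constructor
    · intro b hb
      rcases le_or_gt b 0 with hb0 | hb0
      · filter_upwards [Filter.eventually_gt_atTop 0] with p hp
        exact lt_of_le_of_lt hb0 (hspos p hp)
      · have hfb : b * Real.exp b < 1 / (E * F) := by
          rw [← hsInfty]; exact hmono b sInfty hb0.le hb
        filter_upwards [hg.eventually (eventually_gt_nhds hfb),
          Filter.eventually_gt_atTop 0] with p h1' hp
        by_contra hle
        push_neg at hle
        have : s p * Real.exp (s p) ≤ b * Real.exp b :=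
          hmono' (s p) b (hspos p hp).le hle
        rw [hs p hp] at this
        exact absurd h1' (not_lt.2 this)
    · intro b hb
      have hfb : 1 / (E * F) < b * Real.exp b := by
        rw [← hsInfty]; exact hmono sInfty b hsInftyPos.le hb
      filter_upwards [hg.eventually (eventually_lt_nhds hfb),
        Filter.eventually_gt_atTop 0] with p h1' hp
      by_contra hle
      push_neg at hle
      have : b * Real.exp b ≤ s p * Real.exp (s p) :=
        hmono' b (s p) (lt_trans hsInftyPos hb).le hle
      rw [hs p hp] at this
      exact absurd h1' (not_lt.2 this)
  have hExpS : Filter.Tendsto (fun p => Real.exp (s p)) Filter.atTop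
      (nhds (Real.exp sInfty)) := (Real.continuous_exp.tendsto _).comp hS
  have hinv : Filter.Tendsto (fun p : ℝ => E / p) Filter.atTop (nhds 0) :=
    Filter.Tendsto.div_atTop (tendsto_const_nhds (x := E)) Filter.tendsto_id
  have hexp : Filter.Tendsto (fun p => -(E / p) * ((1 + F * p) * Real.exp (s p) - 1))
      Filter.atTop (nhds (-(E * F * Real.exp sInfty))) := by
    have key : Filter.Tendsto
        (fun p => -((E / p) * Real.exp (s p)) - E * F * Real.exp (s p) + E / p)
        Filter.atTop
        (nhds (-((0:ℝ) * Real.exp sInfty) - E * F * Real.exp sInfty + 0)) :=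
      (((hinv.mul hExpS).neg.sub (tendsto_const_nhds.mul hExpS)).add hinv)
    have heq : (fun p => -((E / p) * Real.exp (s p)) - E * F * Real.exp (s p) + E / p)
        =ᶠ[Filter.atTop] (fun p => -(E / p) * ((1 + F * p) * Real.exp (s p) - 1)) := by
      filter_upwards [Filter.eventually_gt_atTop 0] with p hp
      field_simp
      ring
    have := Filter.Tendsto.congr' heq key
    simpa using this
  have hfin := (hS.div_const (N * Real.log 2)).mul
    ((Real.continuous_exp.tendsto _).comp hexp)
  exact hfin
end

section
/- Let N ≥ 1, L > 0, p > 0 and α > 0 be reals, let a ∈ ℝ, set K₄ = N·((L/N)^α + 1)/p, and define f(x) = (x − a)·exp(−K₄·(2^x − 1)). If w > 0 satisfies w·e^w = 2^{−a}/K₄, then x* = a + w/ln 2 satisfies x* > a and (ln 2)·K₄·2^{x*}·(x* − a) = 1, and for every x > a with x ≠ x*, f(x) < f(x*); that is, f attains its strict global maximum on (a, ∞) at x*. -/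
/-- Theorem 3 (NOFT scheme): with `K₄ = N·((L/N)^α + 1)/p`,
`f(x) = (x - a)·exp(-K₄·(2^x - 1))`, and `w > 0` satisfying
`w·e^w = 2^{-a}/K₄`, the point `x* = a + w/ln 2` satisfies `x* > a` and
`(ln 2)·K₄·2^{x*}·(x* - a) = 1`, and `f` attains its strict global maximum on
`(a, ∞)` at `x*`. -/
theorem throughput_strict_max_NOFT (N L p α a w : ℝ)
    (hN : 1 ≤ N) (hL : 0 < L) (hp : 0 < p) (hα : 0 < α) (hw : 0 < w)
    (hLambert : w * Real.exp w = (2 : ℝ) ^ (-a) / (N * ((L / N) ^ α + 1) / p)) :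
    a < a + w / Real.log 2 ∧
    Real.log 2 * (N * ((L / N) ^ α + 1) / p) *
        (2 : ℝ) ^ (a + w / Real.log 2) * ((a + w / Real.log 2) - a) = 1 ∧
    ∀ x : ℝ, a < x → x ≠ a + w / Real.log 2 →
      (x - a) * Real.exp (-(N * ((L / N) ^ α + 1) / p) * ((2 : ℝ) ^ x - 1)) <
        ((a + w / Real.log 2) - a) *
          Real.exp (-(N * ((L / N) ^ α + 1) / p) *
            ((2 : ℝ) ^ (a + w / Real.log 2) - 1)) := by
  set K := N * ((L / N) ^ α + 1) / p with hK_def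
  have hN0 : (0:ℝ) < N := lt_of_lt_of_le one_pos hN
  have hK : 0 < K := by
    apply div_pos _ hp
    have : (0:ℝ) < (L / N) ^ α := Real.rpow_pos_of_pos (div_pos hL hN0) α
    nlinarith
  have hlog2 : 0 < Real.log 2 := Real.log_pos (by norm_num)
  set t := w / Real.log 2 with ht_def
  have ht : 0 < t := div_pos hw hlog2
  have hlt : Real.log 2 * t = w := by
    rw [ht_def]; field_simp
  have hE : (2:ℝ) ^ (a + t) = (2:ℝ) ^ a * Real.exp w := by
    have h2t : (2:ℝ) ^ t = Real.exp w := by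
      rw [Real.rpow_def_of_pos (by norm_num), hlt]
    rw [Real.rpow_add (by norm_num : (0:ℝ) < 2), h2t]
  set E := (2:ℝ) ^ (a + t) with hE_def
  have hEpos : 0 < E := Real.rpow_pos_of_pos (by norm_num) _
  have h2a : (2:ℝ) ^ a * (2:ℝ) ^ (-a) = 1 := by
    rw [← Real.rpow_add (by norm_num : (0:ℝ) < 2)]; simp
  have hC : Real.log 2 * K * E * ((a + t) - a) = 1 := by
    have h1 : Real.log 2 * K * E * ((a + t) - a)
        = K * (2:ℝ) ^ a * (w * Real.exp w) := by
      rw [hE, ← hlt]; ring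
    rw [h1, hLambert]
    field_simp
    linear_combination h2a
  refine ⟨by linarith, hC, ?_⟩
  intro x hx hxne
  set s := x - a with hs_def
  have hs : 0 < s := by simp [hs_def]; linarith
  have hst : s ≠ t := by
    intro h
    apply hxne
    rw [hs_def] at h
    linarith
  -- key inverse identity
  have hinv : K * Real.log 2 * E = 1 / t := by
    rw [eq_div_iff ht.ne']
    have : (a + t) - a = t := by ring
    rw [this] at hC
    linear_combination hC
  -- Lemma A : log s - log t < (s - t) * (K * log 2 * E)
  have hA : Real.log s - Real.log t < (s - t) * (K * Real.log 2 * E) := by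
    have hdiv : (0:ℝ) < s / t := div_pos hs ht
    have hne : s / t ≠ 1 := by
      intro h
      apply hst
      field_simp at h
      linarith
    have := Real.log_lt_sub_one_of_pos hdiv hne
    rw [Real.log_div hs.ne' ht.ne'] at this
    have heq : s / t - 1 = (s - t) * (1 / t) := by field_simp
    rw [hinv, ← heq]
    linarith
  -- Lemma B : (s - t) * (K * log 2 * E) ≤ K * (2^x - E)
  have hB : (s - t) * (K * Real.log 2 * E) ≤ K * ((2:ℝ) ^ x - E) := by
    have hsplit : (2:ℝ) ^ x = E * Real.exp (Real.log 2 * (x - (a + t))) := by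
      rw [hE_def, ← Real.rpow_def_of_pos (by norm_num : (0:ℝ) < 2),
        ← Real.rpow_add (by norm_num : (0:ℝ) < 2)]
      ring_nf
    have hexp : 1 + Real.log 2 * (x - (a + t)) ≤ Real.exp (Real.log 2 * (x - (a + t))) := by
      linarith [Real.add_one_le_exp (Real.log 2 * (x - (a + t)))]
    have hxs : x - (a + t) = s - t := by rw [hs_def]; ring
    rw [hxs] at hexp
    rw [hsplit, hxs]
    nlinarith [mul_pos hK hEpos, mul_le_mul_of_nonneg_left hexp (le_of_lt (mul_pos hK hEpos))]
  -- assemble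
  have hLHS : s * Real.exp (-K * ((2:ℝ) ^ x - 1))
      = Real.exp (Real.log s + (-K * ((2:ℝ) ^ x - 1))) := by
    rw [Real.exp_add, Real.exp_log hs]
  have hta : (a + t) - a = t := by ring
  have hRHS : ((a + t) - a) * Real.exp (-K * (E - 1))
      = Real.exp (Real.log t + (-K * (E - 1))) := by
    rw [hta, Real.exp_add, Real.exp_log ht]
  calc (x - a) * Real.exp (-K * ((2:ℝ) ^ x - 1))
      = Real.exp (Real.log s + (-K * ((2:ℝ) ^ x - 1))) := by rw [← hs_def, hLHS]
    _ < Real.exp (Real.log t + (-K * (E - 1))) := by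
        apply Real.exp_lt_exp.mpr
        nlinarith [hA, hB]
    _ = ((a + t) - a) * Real.exp (-K * (E - 1)) := hRHS.symm
end
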